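/- Let n = 3^s·t where s ≥ 1, t > 1 and 3 ∤ t. For every τ ∈ Sym([3]), every i ∈ {0, ..., s} and every x ∈ [3n], the permutation σ^i ρ_τ σ^{−i} maps x to the element obtained from x by replacing the base-3 digit x_{s−i} of ⌊x/t⌋ by τ(x_{s−i}) and leaving all other digits and X unchanged; that is, (σ^i ρ_τ σ^{−i})(x) = x + (τ(x_{s−i}) − x_{s−i})·3^{s−i}·t. -/

import Mathlib

lemma shuffleAux.div_lt (k n : ℕ) (x : Fin (k * n)) : (x : ℕ) / n < k := by
  have hx := x.isLt
  have hn : 0 < n := by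
    rcases Nat.eq_zero_or_pos n with rfl | h
    · simp at hx
    · exact h
  exact (Nat.div_lt_iff_lt_mul hn).mpr hx

lemma shuffleAux.mod_lt (k n : ℕ) (x : Fin (k * n)) : (x : ℕ) % n < n := by
  have hx := x.isLt
  have hn : 0 < n := by
    rcases Nat.eq_zero_or_pos n with rfl | h
    · simp at hx
    · exact h
  exact Nat.mod_lt _ hn

lemma shuffleAux.bound1 (k n : ℕ) (x : Fin (k * n)) :
    k * ((x : ℕ) % n) + (x : ℕ) / n < k * n := by
  have h1 := shuffleAux.mod_lt k n x
  have h2 := shuffleAux.div_lt k n x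
  calc k * ((x : ℕ) % n) + (x : ℕ) / n
      < k * ((x : ℕ) % n) + k := by omega
    _ = k * ((x : ℕ) % n + 1) := by ring
    _ ≤ k * n := Nat.mul_le_mul_left _ (by omega)

lemma shuffleAux.bound2 (k n : ℕ) (x : Fin (k * n)) (j : Fin k) :
    (x : ℕ) % n + (j : ℕ) * n < k * n := by
  have h1 := shuffleAux.mod_lt k n x
  have h2 := j.isLt
  calc (x : ℕ) % n + (j : ℕ) * n
      < n + (j : ℕ) * n := by omega
    _ = ((j : ℕ) + 1) * n := by ring
    _ ≤ k * n := Nat.mul_le_mul_right _ (by omega)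

/-- The standard shuffle `σ` on a deck of `k * n` cards, where the card in position
`i + j·n` (`i ∈ [n]`, `j ∈ [k]`) is sent to position `k·i + j`; equivalently
`σ(x) = k·(x mod n) + ⌊x / n⌋`. -/
noncomputable def stdShuffle (k n : ℕ) : Equiv.Perm (Fin (k * n)) :=
  Equiv.ofBijective
    (fun x => ⟨k * ((x : ℕ) % n) + (x : ℕ) / n, shuffleAux.bound1 k n x⟩)
    (Finite.injective_iff_bijective.mp (by
      intro x y hxy
      simp only [Fin.mk.injEq] at hxy
      have hk : 0 < k := lt_of_le_of_lt (Nat.zero_le _) (shuffleAux.div_lt k n x)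
      have key : ∀ z : Fin (k * n),
          (k * ((z : ℕ) % n) + (z : ℕ) / n) % k = (z : ℕ) / n ∧
          (k * ((z : ℕ) % n) + (z : ℕ) / n) / k = (z : ℕ) % n := by
        intro z
        have hz := shuffleAux.div_lt k n z
        constructor
        · rw [Nat.mul_add_mod, Nat.mod_eq_of_lt hz]
        · rw [Nat.mul_add_div hk, Nat.div_eq_of_lt hz, Nat.add_zero]
      obtain ⟨h1x, h2x⟩ := key x
      obtain ⟨h1y, h2y⟩ := key y
      rw [hxy] at h1x h2x
      have hd : (x : ℕ) / n = (y : ℕ) / n := by omega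
      have hm : (x : ℕ) % n = (y : ℕ) % n := by omega
      apply Fin.ext
      rw [← Nat.div_add_mod (x : ℕ) n, ← Nat.div_add_mod (y : ℕ) n, hd, hm]))

/-- The permutation `ρ_τ` induced by a permutation `τ` of the `k` piles:
`ρ_τ(i + j·n) = i + τ(j)·n` for `i ∈ [n]`, `j ∈ [k]`. -/
noncomputable def pilePerm (k n : ℕ) (τ : Equiv.Perm (Fin k)) : Equiv.Perm (Fin (k * n)) :=
  Equiv.ofBijective
    (fun x => ⟨(x : ℕ) % n + ((τ ⟨(x : ℕ) / n, shuffleAux.div_lt k n x⟩ : Fin k) : ℕ) * n,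
      shuffleAux.bound2 k n x _⟩)
    (Finite.injective_iff_bijective.mp (by
      intro x y hxy
      simp only [Fin.mk.injEq] at hxy
      have hn : 0 < n := lt_of_le_of_lt (Nat.zero_le _) (shuffleAux.mod_lt k n x)
      have key : ∀ z : Fin (k * n),
          ((z : ℕ) % n + ((τ ⟨(z : ℕ) / n, shuffleAux.div_lt k n z⟩ : Fin k) : ℕ) * n) % n
            = (z : ℕ) % n ∧
          ((z : ℕ) % n + ((τ ⟨(z : ℕ) / n, shuffleAux.div_lt k n z⟩ : Fin k) : ℕ) * n) / n
            = ((τ ⟨(z : ℕ) / n, shuffleAux.div_lt k n z⟩ : Fin k) : ℕ) := by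
        intro z
        have h1 := shuffleAux.mod_lt k n z
        constructor
        · rw [Nat.add_mul_mod_self_right, Nat.mod_eq_of_lt h1]
        · rw [Nat.add_mul_div_right _ _ hn, Nat.div_eq_of_lt h1, Nat.zero_add]
      obtain ⟨h1x, h2x⟩ := key x
      obtain ⟨h1y, h2y⟩ := key y
      rw [hxy] at h1x h2x
      have hm : (x : ℕ) % n = (y : ℕ) % n := by omega
      have hv : ((τ ⟨(x : ℕ) / n, shuffleAux.div_lt k n x⟩ : Fin k) : ℕ)
          = ((τ ⟨(y : ℕ) / n, shuffleAux.div_lt k n y⟩ : Fin k) : ℕ) := by omega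
      have hτ : (⟨(x : ℕ) / n, shuffleAux.div_lt k n x⟩ : Fin k)
          = ⟨(y : ℕ) / n, shuffleAux.div_lt k n y⟩ := τ.injective (Fin.ext hv)
      have hd : (x : ℕ) / n = (y : ℕ) / n := congrArg Fin.val hτ
      apply Fin.ext
      rw [← Nat.div_add_mod (x : ℕ) n, ← Nat.div_add_mod (y : ℕ) n, hd, hm]))

/-- The shuffle group `G_{k,kn}`, generated by the standard shuffle `σ` together with
the pile permutations `ρ_τ` for all `τ ∈ Sym([k])`. -/
noncomputable def shuffleGroup (k n : ℕ) : Subgroup (Equiv.Perm (Fin (k * n))) :=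
  Subgroup.closure ({stdShuffle k n} ∪ Set.range (pilePerm k n))

/-- For `x ∈ [3n]` with `n = 3^s·t`, the `i`-th base-3 digit `x_i` of `⌊x/t⌋`. -/
def digit (t x i : ℕ) : ℕ := (x / t / 3 ^ i) % 3

lemma digit_lt (t x i : ℕ) : digit t x i < 3 := Nat.mod_lt _ (by omega)

/-- `T(x) = |{i ∈ {0,...,s} : x_i = 2}|`, the number of base-3 digits of `⌊x/t⌋`
(among positions `0,...,s`) equal to `2`. -/
def twoCount (s t x : ℕ) : ℕ :=
  ((Finset.range (s + 1)).filter (fun i => digit t x i = 2)).card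

section ConjAux

lemma stdShuffle_apply (k n : ℕ) (x : Fin (k * n)) :
    ((stdShuffle k n x : Fin (k * n)) : ℕ) = k * ((x : ℕ) % n) + (x : ℕ) / n := rfl

lemma pilePerm_apply (k n : ℕ) (τ : Equiv.Perm (Fin k)) (x : Fin (k * n)) :
    ((pilePerm k n τ x : Fin (k * n)) : ℕ) =
      (x : ℕ) % n + ((τ ⟨(x : ℕ) / n, shuffleAux.div_lt k n x⟩ : Fin k) : ℕ) * n := rfl

lemma digit_eq_div (t x p : ℕ) : digit t x p = (x / (3 ^ p * t)) % 3 := by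
  unfold digit
  rw [Nat.div_div_eq_div_mul, mul_comm]

lemma conjAux.key_le (u x : ℕ) : (x / u) % 3 * u ≤ x :=
  le_trans (Nat.mul_le_mul_right u (Nat.mod_le _ _)) (Nat.div_mul_le_self x u)

lemma conjAux.key_lt (u m x c : ℕ) (hu : 0 < u) (hm : 0 < m) (hx : x < 3 * m * u)
    (hc : c < 3) : x - (x / u) % 3 * u + c * u < 3 * m * u := by
  have hq : x / u < 3 * m := by
    rw [Nat.div_lt_iff_lt_mul hu]; nlinarith [hx]
  have h1 : x / u = 3 * (x / u / 3) + (x / u) % 3 := (Nat.div_add_mod _ 3).symm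
  have ha : x / u / 3 < m := by omega
  have hx2 : u * (x / u) + x % u = x := Nat.div_add_mod x u
  have hr : x % u < u := Nat.mod_lt _ hu
  have hC : c * u ≤ 2 * u := Nat.mul_le_mul_right u (by omega)
  have hA : (x / u / 3) * u + u ≤ m * u := by
    have := Nat.mul_le_mul_right u (by omega : x / u / 3 + 1 ≤ m)
    nlinarith [this]
  have hx3 : x = 3 * ((x / u / 3) * u) + (x / u) % 3 * u + x % u := by
    nlinarith [hx2, h1]
  have hgoal : x - (x / u) % 3 * u + c * u < 3 * (m * u) := by
    generalize (x / u / 3) * u = A at hA hx3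
    generalize (x / u) % 3 * u = D at hx3 ⊢
    generalize c * u = C at hC ⊢
    generalize m * u = M at hA ⊢
    omega
  nlinarith [hgoal]

lemma conjAux.mod_div_digit (u m x : ℕ) : ((x % (3 * m * u)) / u) % 3 = (x / u) % 3 := by
  rw [show 3 * m * u = u * (3 * m) by ring, Nat.mod_mul_right_div_self,
    Nat.mod_mod_of_dvd _ ⟨m, rfl⟩]

lemma conjAux.divmod_add (n q r : ℕ) (h : r < n) :
    (n * q + r) / n = q ∧ (n * q + r) % n = r := by
  have hn : 0 < n := by omega
  constructor
  · rw [Nat.mul_add_div hn, Nat.div_eq_of_lt h, add_zero]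
  · rw [Nat.mul_add_mod, Nat.mod_eq_of_lt h]

/-- digit shift: the `(p+1)`-st digit of `σ(x)` equals the `p`-th digit of `x`. -/
lemma conjAux.digit_shift (u m x q : ℕ) (hq : q < 3) :
    (3 * (x % (3 * m * u)) + q) / (3 * u) % 3 = (x / u) % 3 := by
  rw [← Nat.div_div_eq_div_mul, Nat.mul_add_div (by omega : 0 < 3),
    Nat.div_eq_of_lt hq, add_zero, conjAux.mod_div_digit]

end ConjAux

/-- The permutation `σ^i ρ_τ σ^{-i}` of the paper (acting on the right, i.e. applying
`σ^i` first, then `ρ_τ`, then `σ^{-i}`) replaces the base-3 digit `x_{s-i}` of `⌊x/t⌋`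
by `τ(x_{s-i})` and leaves all other digits and `X = x mod t` unchanged. -/
theorem conj_digit_action (s t n : ℕ) (hs : 1 ≤ s) (ht : 1 < t) (h3t : ¬ 3 ∣ t) (hn : n = 3 ^ s * t) :
    ∀ (τ : Equiv.Perm (Fin 3)) (i : ℕ), i ≤ s →
      ∀ x : Fin (3 * n),
        (((((stdShuffle 3 n) ^ i)⁻¹ * pilePerm 3 n τ * (stdShuffle 3 n) ^ i) x : ℕ) : ℤ) =
          (x : ℕ) +
            (((τ ⟨digit t (x : ℕ) (s - i), digit_lt t (x : ℕ) (s - i)⟩ : Fin 3) : ℕ) -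
                (digit t (x : ℕ) (s - i) : ℤ)) * 3 ^ (s - i) * t := by
  have hnpos : 0 < n := by rw [hn]; positivity
  intro τ i
  induction i with
  | zero =>
    intro _ x
    simp only [pow_zero, inv_one, one_mul, mul_one, Nat.sub_zero]
    have hdiv : (x : ℕ) / n < 3 := shuffleAux.div_lt 3 n x
    have hdig : digit t (x : ℕ) s = (x : ℕ) / n := by
      rw [digit_eq_div, ← hn, Nat.mod_eq_of_lt hdiv]
    have hmk : (⟨digit t (x : ℕ) s, digit_lt t (x : ℕ) s⟩ : Fin 3) =
        ⟨(x : ℕ) / n, shuffleAux.div_lt 3 n x⟩ := Fin.ext hdig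
    rw [pilePerm_apply, hmk, hdig]
    have hmod : n * ((x : ℕ) / n) + (x : ℕ) % n = (x : ℕ) := Nat.div_add_mod _ _
    have e1 : (((x : ℕ) : ℤ)) =
        (n : ℤ) * (((x : ℕ) / n : ℕ) : ℤ) + (((x : ℕ) % n : ℕ) : ℤ) := by
      exact_mod_cast hmod.symm
    have e2 : (n : ℤ) = 3 ^ s * (t : ℤ) := by exact_mod_cast hn
    simp only [Nat.cast_add, Nat.cast_mul]
    rw [e1, e2]
    ring
  | succ i ih =>
    intro hi x
    have hi' : i ≤ s := by omega
    set p := s - (i + 1) with hp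
    have hsi : s - i = p + 1 := by omega
    set u : ℕ := 3 ^ p * t with hu_def
    have hu : 0 < u := by positivity
    set m : ℕ := 3 ^ i with hm_def
    have hm : 0 < m := by positivity
    have hnmu : n = 3 * m * u := by
      rw [hn, hm_def, hu_def, show s = i + 1 + p by omega]; ring
    set d := digit t (x : ℕ) p with hd
    have hd3 : d < 3 := digit_lt t (x : ℕ) p
    have hd_eq : d = ((x : ℕ) / u) % 3 := by rw [hd, digit_eq_div, hu_def]
    have hq3 : (x : ℕ) / (3 * m * u) < 3 := by
      rw [← hnmu]; exact shuffleAux.div_lt 3 n x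
    have hshift := conjAux.digit_shift u m (x : ℕ) ((x : ℕ) / n) (shuffleAux.div_lt 3 n x)
    rw [← hnmu] at hshift
    -- the digit of σ x in position s - i is the digit of x in position p
    have hdig2 : digit t ((stdShuffle 3 n x : Fin (3 * n)) : ℕ) (s - i) = d := by
      rw [hsi, digit_eq_div, stdShuffle_apply,
        show (3 : ℕ) ^ (p + 1) * t = 3 * u by rw [hu_def]; ring, hshift, hd_eq]
    have hA := ih hi' (stdShuffle 3 n x)
    have hmk2 : (⟨digit t ((stdShuffle 3 n x : Fin (3 * n)) : ℕ) (s - i),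
          digit_lt t ((stdShuffle 3 n x : Fin (3 * n)) : ℕ) (s - i)⟩ : Fin 3)
        = ⟨d, digit_lt t (x : ℕ) p⟩ := Fin.ext hdig2
    rw [hmk2, hdig2, hsi] at hA
    set c := ((τ ⟨d, digit_lt t (x : ℕ) p⟩ : Fin 3) : ℕ) with hc
    have hc3 : c < 3 := (τ ⟨d, digit_lt t (x : ℕ) p⟩).isLt
    -- abbreviations for values
    have hr : (x : ℕ) % n < n := Nat.mod_lt _ hnpos
    have hσxval : ((stdShuffle 3 n x : Fin (3 * n)) : ℕ) = 3 * ((x : ℕ) % n) + (x : ℕ) / n :=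
      stdShuffle_apply 3 n x
    have hmd := conjAux.mod_div_digit u m (x : ℕ)
    rw [← hnmu] at hmd
    have hdr : d = ((x : ℕ) % n / u) % 3 := by rw [hd_eq, ← hmd]
    have hdru : d * u ≤ (x : ℕ) % n := by rw [hdr]; exact conjAux.key_le u _
    have hxu : d * u ≤ (x : ℕ) := by rw [hd_eq]; exact conjAux.key_le u (x : ℕ)
    -- the natural-number value of the inner conjugation applied to σ x
    have hdle : 3 * (d * u) ≤ ((stdShuffle 3 n x : Fin (3 * n)) : ℕ) := by
      have h1 : d = (((stdShuffle 3 n x : Fin (3 * n)) : ℕ) / (3 * u)) % 3 := by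
        rw [hσxval, hshift, hd_eq]
      have h2 := conjAux.key_le (3 * u) ((stdShuffle 3 n x : Fin (3 * n)) : ℕ)
      rw [← h1] at h2
      calc 3 * (d * u) = d * (3 * u) := by ring
        _ ≤ _ := h2
    have hBZ : (((((stdShuffle 3 n) ^ i)⁻¹ * pilePerm 3 n τ * (stdShuffle 3 n) ^ i)
          (stdShuffle 3 n x) : ℕ) : ℤ) =
        (((stdShuffle 3 n x : Fin (3 * n)) : ℕ) : ℤ)
          + ((3 * (c * u) : ℕ) : ℤ) - ((3 * (d * u) : ℕ) : ℤ) := by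
      rw [hA]
      have hui : ((u : ℕ) : ℤ) = 3 ^ p * (t : ℤ) := by rw [hu_def]; push_cast; ring
      push_cast
      rw [hui]; ring
    have hBn : ((((stdShuffle 3 n) ^ i)⁻¹ * pilePerm 3 n τ * (stdShuffle 3 n) ^ i)
          (stdShuffle 3 n x) : ℕ)
        = ((stdShuffle 3 n x : Fin (3 * n)) : ℕ) - 3 * (d * u) + 3 * (c * u) := by omega
    -- the preimage y of the inner value under σ
    have hylt : (x : ℕ) - d * u + c * u < 3 * n := by
      have h1 : (x : ℕ) < 3 * (3 * m) * u := lt_of_lt_of_eq x.isLt (by rw [hnmu]; ring)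
      have h2 := conjAux.key_lt u (3 * m) (x : ℕ) c hu (by omega) h1 hc3
      rw [← hd_eq] at h2
      calc (x : ℕ) - d * u + c * u < 3 * (3 * m) * u := h2
        _ = 3 * n := by rw [hnmu]; ring
    set y : Fin (3 * n) := ⟨(x : ℕ) - d * u + c * u, hylt⟩ with hy
    have hr'lt : (x : ℕ) % n - d * u + c * u < n := by
      have h1 := conjAux.key_lt u m ((x : ℕ) % n) c hu hm (by rw [← hnmu]; exact hr) hc3
      rw [← hdr] at h1
      exact lt_of_lt_of_eq h1 hnmu.symm
    have hy_decomp : (y : ℕ) = n * ((x : ℕ) / n) + ((x : ℕ) % n - d * u + c * u) := by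
      have hx1 : n * ((x : ℕ) / n) + (x : ℕ) % n = (x : ℕ) := Nat.div_add_mod _ _
      have hy1 : (y : ℕ) = (x : ℕ) - d * u + c * u := rfl
      omega
    have hydm := conjAux.divmod_add n ((x : ℕ) / n) ((x : ℕ) % n - d * u + c * u) hr'lt
    have hydiv : (y : ℕ) / n = (x : ℕ) / n := by rw [hy_decomp]; exact hydm.1
    have hymod : (y : ℕ) % n = (x : ℕ) % n - d * u + c * u := by rw [hy_decomp]; exact hydm.2
    have hσy : stdShuffle 3 n y
        = ((stdShuffle 3 n ^ i)⁻¹ * pilePerm 3 n τ * stdShuffle 3 n ^ i) (stdShuffle 3 n x) := by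
      apply Fin.ext
      rw [stdShuffle_apply, hydiv, hymod, hBn, hσxval]
      omega
    have hperm : (((stdShuffle 3 n ^ (i + 1))⁻¹ * pilePerm 3 n τ * stdShuffle 3 n ^ (i + 1)) x)
        = (stdShuffle 3 n)⁻¹
            (((stdShuffle 3 n ^ i)⁻¹ * pilePerm 3 n τ * stdShuffle 3 n ^ i)
              (stdShuffle 3 n x)) := by
      simp only [pow_succ, mul_inv_rev, Equiv.Perm.mul_apply]
    rw [hperm, ← hσy, Equiv.Perm.inv_def, Equiv.symm_apply_apply]
    -- final value computation
    have hui : ((u : ℕ) : ℤ) = 3 ^ p * (t : ℤ) := by rw [hu_def]; push_cast; ring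
    have hyv : ((y : ℕ) : ℤ) = (((x : ℕ) : ℤ)) - ((d * u : ℕ) : ℤ) + ((c * u : ℕ) : ℤ) := by
      have hy1 : (y : ℕ) = (x : ℕ) - d * u + c * u := rfl
      omega
    rw [hyv]
    push_cast
    rw [hui]
    ring
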